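/- For every ideal I of a commutative unital ring R, the smallest quadratic module of M_n(R) containing I·I_n equals Σ_n(R) + S_n(I), where Σ_n(R) is the set of sums of matrices A^T A and S_n(I) is the set of symmetric matrices with all entries in I. Moreover this set is a preordering. -/

import Mathlib

open Matrix

/-- A quadratic module in `M_n(R)`. -/
def IsQM {n : ℕ} {R : Type*} [CommRing R] (M : Set (Matrix (Fin n) (Fin n) R)) : Prop :=
  (∀ A ∈ M, A.IsSymm) ∧ (1 : Matrix (Fin n) (Fin n) R) ∈ M ∧
  (∀ a ∈ M, ∀ b ∈ M, a + b ∈ M) ∧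
  ∀ (A : Matrix (Fin n) (Fin n) R), ∀ m ∈ M, Aᵀ * m * A ∈ M

/-- The smallest quadratic module of `M_n(R)` containing `S`. -/
def QMgen {n : ℕ} {R : Type*} [CommRing R] (S : Set (Matrix (Fin n) (Fin n) R)) :
    Set (Matrix (Fin n) (Fin n) R) :=
  ⋂₀ {M | IsQM M ∧ S ⊆ M}

/-- A preordering in `M_n(R)`: a quadratic module whose intersection with the
center `R·I_n` is closed under multiplication. -/
def IsPre {n : ℕ} {R : Type*} [CommRing R] (M : Set (Matrix (Fin n) (Fin n) R)) : Prop :=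
  IsQM M ∧ ∀ r s : R, r • (1 : Matrix (Fin n) (Fin n) R) ∈ M →
    s • (1 : Matrix (Fin n) (Fin n) R) ∈ M → (r * s) • (1 : Matrix (Fin n) (Fin n) R) ∈ M

/-- `Σ_n(R)`: finite sums of matrices `Aᵀ * A`. -/
def SigmaN (n : ℕ) (R : Type*) [CommRing R] : Set (Matrix (Fin n) (Fin n) R) :=
  (AddSubmonoid.closure {A : Matrix (Fin n) (Fin n) R |
    ∃ B : Matrix (Fin n) (Fin n) R, A = Bᵀ * B} : AddSubmonoid (Matrix (Fin n) (Fin n) R))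


section Aux
variable {n : ℕ} {R : Type*} [CommRing R]

lemma sigma_sq (B : Matrix (Fin n) (Fin n) R) : Bᵀ * B ∈ SigmaN n R := by
  exact AddSubmonoid.subset_closure ⟨B, rfl⟩

lemma sigma_zero : (0 : Matrix (Fin n) (Fin n) R) ∈ SigmaN n R :=
  (AddSubmonoid.closure _).zero_mem

lemma sigma_add {a b : Matrix (Fin n) (Fin n) R} (ha : a ∈ SigmaN n R) (hb : b ∈ SigmaN n R) :
    a + b ∈ SigmaN n R := (AddSubmonoid.closure _).add_mem ha hb

lemma sigma_one : (1 : Matrix (Fin n) (Fin n) R) ∈ SigmaN n R := by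
  have := sigma_sq (1 : Matrix (Fin n) (Fin n) R)
  simpa using this

lemma sigma_symm {s : Matrix (Fin n) (Fin n) R} (hs : s ∈ SigmaN n R) : s.IsSymm := by
  induction hs using AddSubmonoid.closure_induction with
  | mem x hx => obtain ⟨B, rfl⟩ := hx; simp [Matrix.IsSymm, Matrix.transpose_mul]
  | zero => simp [Matrix.IsSymm]
  | add x y _ _ hx hy => exact hx.add hy

lemma sigma_conj (A : Matrix (Fin n) (Fin n) R) {s : Matrix (Fin n) (Fin n) R}
    (hs : s ∈ SigmaN n R) : Aᵀ * s * A ∈ SigmaN n R := by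
  induction hs using AddSubmonoid.closure_induction with
  | mem x hx =>
    obtain ⟨B, rfl⟩ := hx
    have : Aᵀ * (Bᵀ * B) * A = (B * A)ᵀ * (B * A) := by
      rw [Matrix.transpose_mul]; noncomm_ring
    rw [this]; exact sigma_sq _
  | zero => simpa using sigma_zero
  | add x y _ _ hx hy =>
    have : Aᵀ * (x + y) * A = Aᵀ * x * A + Aᵀ * y * A := by
      rw [Matrix.mul_add, Matrix.add_mul]
    rw [this]; exact sigma_add hx hy

end Aux

section QM
variable {n : ℕ} {R : Type*} [CommRing R] {M : Set (Matrix (Fin n) (Fin n) R)}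

lemma qm_zero (hM : IsQM M) : (0 : Matrix (Fin n) (Fin n) R) ∈ M := by
  have h := hM.2.2.2 0 1 hM.2.1
  simpa using h

lemma qm_sum (hM : IsQM M) {α : Type*} (s : Finset α)
    (f : α → Matrix (Fin n) (Fin n) R) (h : ∀ x ∈ s, f x ∈ M) : ∑ x ∈ s, f x ∈ M :=
  Finset.sum_induction f (· ∈ M) (fun a b ha hb => hM.2.2.1 a ha b hb) (qm_zero hM) h

/-- `r • σ ∈ M` whenever `r • 1 ∈ M` and `σ ∈ Σ_n(R)`. -/
lemma qm_smul_sigma (hM : IsQM M) {r : R}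
    (hr : r • (1 : Matrix (Fin n) (Fin n) R) ∈ M)
    {s : Matrix (Fin n) (Fin n) R} (hs : s ∈ SigmaN n R) : r • s ∈ M := by
  induction hs using AddSubmonoid.closure_induction with
  | mem x hx =>
    obtain ⟨B, rfl⟩ := hx
    have : r • (Bᵀ * B) = Bᵀ * (r • 1) * B := by
      rw [Matrix.mul_smul, Matrix.smul_mul, Matrix.mul_one]
    rw [this]; exact hM.2.2.2 B _ hr
  | zero => simpa using qm_zero hM
  | add x y _ _ hx hy => rw [smul_add]; exact hM.2.2.1 _ hx _ hy

lemma qm_sigma (hM : IsQM M) {s : Matrix (Fin n) (Fin n) R} (hs : s ∈ SigmaN n R) : s ∈ M := by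
  have := qm_smul_sigma hM (by simpa using hM.2.1) hs (r := 1)
  simpa using this

variable {I : Ideal R}

lemma qm_outer [NeZero n] (hM : IsQM M)
    (hI : ∀ a ∈ I, a • (1 : Matrix (Fin n) (Fin n) R) ∈ M)
    {a : R} (ha : a ∈ I) (u : Fin n → R) : a • vecMulVec u u ∈ M := by
  set A : Matrix (Fin n) (Fin n) R := Matrix.of fun k j => if k = (0 : Fin n) then u j else 0
    with hA
  have h1 : Aᵀ * (a • 1) * A = a • vecMulVec u u := by
    rw [Matrix.mul_smul, Matrix.smul_mul, Matrix.mul_one]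
    congr 1
    ext i j
    simp [Matrix.mul_apply, hA, vecMulVec_apply, ite_mul, mul_ite, Finset.sum_ite_eq']
  rw [← h1]; exact hM.2.2.2 A _ (hI a ha)

lemma qm_pair [NeZero n] (hM : IsQM M)
    (hI : ∀ a ∈ I, a • (1 : Matrix (Fin n) (Fin n) R) ∈ M)
    {a : R} (ha : a ∈ I) (u v : Fin n → R) :
    a • (vecMulVec u v + vecMulVec v u) ∈ M := by
  have key : a • (vecMulVec u v + vecMulVec v u)
      = a • vecMulVec (u + v) (u + v) + ((-a) • vecMulVec u u + (-a) • vecMulVec v v) := by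
    ext i j
    simp [vecMulVec_apply]
    ring
  rw [key]
  exact hM.2.2.1 _ (qm_outer hM hI ha (u + v)) _
    (hM.2.2.1 _ (qm_outer hM hI (I.neg_mem ha) u) _ (qm_outer hM hI (I.neg_mem ha) v))

end QM

section Key
variable {n : ℕ} {R : Type*} [CommRing R] {M : Set (Matrix (Fin n) (Fin n) R)} {I : Ideal R}

omit [CommRing R] in
lemma ite_apply_mat {c : Prop} [Decidable c] (X Y : Matrix (Fin n) (Fin n) R) (k l : Fin n) :
    (if c then X else Y) k l = if c then X k l else Y k l := by
  split_ifs <;> rfl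

set_option maxHeartbeats 1000000 in
lemma qm_symm_ideal [NeZero n] (hM : IsQM M)
    (hI : ∀ a ∈ I, a • (1 : Matrix (Fin n) (Fin n) R) ∈ M)
    (B : Matrix (Fin n) (Fin n) R) (hBs : B.IsSymm) (hBI : ∀ i j, B i j ∈ I) : B ∈ M := by
  classical
  have hsym : ∀ i j, B i j = B j i := fun i j => by
    conv_lhs => rw [← hBs]
    rw [Matrix.transpose_apply]
  set e : Fin n → (Fin n → R) := fun i => Pi.single i 1 with he
  set h : Fin n → Fin n → Matrix (Fin n) (Fin n) R := fun i j =>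
    if i < j then B i j • (vecMulVec (e i) (e j) + vecMulVec (e j) (e i))
    else if i = j then B i i • vecMulVec (e i) (e i) else 0 with hh
  have hmem : ∀ i j, h i j ∈ M := by
    intro i j
    by_cases h1 : i < j
    · simpa [hh, h1] using qm_pair hM hI (hBI i j) (e i) (e j)
    · by_cases h2 : i = j
      · simpa [hh, h1, h2] using qm_outer hM hI (hBI j j) (e j)
      · simp [hh, h1, h2, qm_zero hM]
  have happ : ∀ i j k l, h i j k l =
      (if i < j then B i j * ((if k = i then (1:R) else 0) * (if l = j then (1:R) else 0)
        + (if k = j then (1:R) else 0) * (if l = i then (1:R) else 0))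
      else if i = j then
        B i i * ((if k = i then (1:R) else 0) * (if l = i then (1:R) else 0))
      else 0) := by
    intro i j k l
    rw [hh]
    dsimp only
    rw [ite_apply_mat, ite_apply_mat]
    by_cases h1 : i < j
    · simp only [if_pos h1, Matrix.add_apply, Matrix.smul_apply, vecMulVec_apply, he,
        Pi.single_apply, smul_eq_mul]
      try ring
    · by_cases h2 : i = j
      · simp only [if_neg h1, if_pos h2, Matrix.smul_apply, vecMulVec_apply, he,
          Pi.single_apply, smul_eq_mul]
        try subst h2
        try ring
      · simp [if_neg h1, if_neg h2]
  have hdec : B = ∑ i : Fin n, ∑ j : Fin n, h i j := by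
    ext k l
    simp only [Matrix.sum_apply]
    rcases lt_trichotomy k l with hkl | hkl | hkl
    · have hpt : ∀ i j, h i j k l = if i = k ∧ j = l then B k l else 0 := by
        intro i j
        rw [happ]
        clear hmem happ hh h hI hM hBI hBs
        split_ifs <;> try rfl
        all_goals try obtain ⟨rfl, rfl⟩ := ‹_ = _ ∧ _ = _›
        all_goals subst_vars
        all_goals first | (exfalso; omega) | (exfalso; simp_all; done) | ring1 | (exact hsym _ _) | (rw [hsym]; try ring1)
      simp [hpt, ite_and, Finset.sum_ite_eq']
    · subst hkl
      have hpt : ∀ i j, h i j k k = if i = k ∧ j = k then B k k else 0 := by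
        intro i j
        rw [happ]
        clear hmem happ hh h hI hM hBI hBs
        split_ifs <;> try rfl
        all_goals try obtain ⟨rfl, rfl⟩ := ‹_ = _ ∧ _ = _›
        all_goals subst_vars
        all_goals first | (exfalso; omega) | (exfalso; simp_all; done) | ring1 | (exact hsym _ _) | (rw [hsym]; try ring1)
      simp [hpt, ite_and, Finset.sum_ite_eq']
    · have hpt : ∀ i j, h i j k l = if i = l ∧ j = k then B k l else 0 := by
        intro i j
        rw [happ]
        clear hmem happ hh h hI hM hBI hBs
        split_ifs <;> try rfl
        all_goals try obtain ⟨rfl, rfl⟩ := ‹_ = _ ∧ _ = _›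
        all_goals subst_vars
        all_goals first | (exfalso; omega) | (exfalso; simp_all; done) | ring1 | (exact hsym _ _) | (rw [hsym]; try ring1)
      simp [hpt, ite_and, Finset.sum_ite_eq']
  rw [hdec]
  exact qm_sum hM _ _ fun i _ => qm_sum hM _ _ fun j _ => hmem i j

end Key

section Main
variable {n : ℕ} {R : Type*} [CommRing R]

lemma conj_entries_mem (I : Ideal R) (A B : Matrix (Fin n) (Fin n) R)
    (hBI : ∀ i j, B i j ∈ I) (i j : Fin n) : (Aᵀ * B * A) i j ∈ I := by
  rw [Matrix.mul_apply]
  refine Ideal.sum_mem _ fun k _ => ?_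
  refine I.mul_mem_right _ ?_
  rw [Matrix.mul_apply]
  exact Ideal.sum_mem _ fun l _ => I.mul_mem_left _ (hBI l k)

lemma conj_isSymm (A B : Matrix (Fin n) (Fin n) R) (hB : B.IsSymm) :
    (Aᵀ * B * A).IsSymm := by
  unfold Matrix.IsSymm at *
  simp [Matrix.transpose_mul, hB, Matrix.mul_assoc]

lemma Tset_isQM (I : Ideal R) :
    IsQM {A : Matrix (Fin n) (Fin n) R | ∃ s ∈ SigmaN n R, ∃ B : Matrix (Fin n) (Fin n) R,
      B.IsSymm ∧ (∀ i j, B i j ∈ I) ∧ A = s + B} := by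
  refine ⟨?_, ?_, ?_, ?_⟩
  · rintro A ⟨s, hs, B, hBs, hBI, rfl⟩
    exact (sigma_symm hs).add hBs
  · exact ⟨1, sigma_one, 0, by simp [Matrix.IsSymm], fun i j => I.zero_mem, by simp⟩
  · rintro a ⟨s1, hs1, B1, h1s, h1I, rfl⟩ b ⟨s2, hs2, B2, h2s, h2I, rfl⟩
    exact ⟨s1 + s2, sigma_add hs1 hs2, B1 + B2, h1s.add h2s,
      fun i j => I.add_mem (h1I i j) (h2I i j), by abel⟩
  · rintro A m ⟨s, hs, B, hBs, hBI, rfl⟩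
    refine ⟨Aᵀ * s * A, sigma_conj A hs, Aᵀ * B * A, conj_isSymm A B hBs,
      conj_entries_mem I A B hBI, ?_⟩
    rw [Matrix.mul_add, Matrix.add_mul]

lemma smul_one_mem_Tset (I : Ideal R) {a : R} (ha : a ∈ I) :
    a • (1 : Matrix (Fin n) (Fin n) R) ∈
      {A : Matrix (Fin n) (Fin n) R | ∃ s ∈ SigmaN n R, ∃ B : Matrix (Fin n) (Fin n) R,
        B.IsSymm ∧ (∀ i j, B i j ∈ I) ∧ A = s + B} := by
  refine ⟨0, sigma_zero, a • 1, ?_, ?_, (zero_add _).symm⟩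
  · show (a • (1 : Matrix (Fin n) (Fin n) R))ᵀ = a • 1
    rw [Matrix.transpose_smul, Matrix.transpose_one]
  · intro i j
    by_cases hij : i = j <;>
      simp [Matrix.smul_apply, Matrix.one_apply, hij, I.zero_mem, ha]

end Main

theorem stmt4 {n : ℕ} [NeZero n] {R : Type*} [CommRing R] (I : Ideal R) :
    QMgen ((fun a : R => a • (1 : Matrix (Fin n) (Fin n) R)) '' I) =
      {A : Matrix (Fin n) (Fin n) R | ∃ s ∈ SigmaN n R, ∃ B : Matrix (Fin n) (Fin n) R,
        B.IsSymm ∧ (∀ i j, B i j ∈ I) ∧ A = s + B} ∧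
    IsPre {A : Matrix (Fin n) (Fin n) R | ∃ s ∈ SigmaN n R, ∃ B : Matrix (Fin n) (Fin n) R,
        B.IsSymm ∧ (∀ i j, B i j ∈ I) ∧ A = s + B} := by
  constructor
  · apply Set.Subset.antisymm
    · intro x hx
      refine Set.mem_sInter.mp hx _ ⟨Tset_isQM I, ?_⟩
      rintro _ ⟨a, ha, rfl⟩
      exact smul_one_mem_Tset I ha
    · rintro x ⟨s, hs, B, hBs, hBI, rfl⟩
      intro M hM
      obtain ⟨hQM, hsub⟩ := hM
      have hI : ∀ a ∈ I, a • (1 : Matrix (Fin n) (Fin n) R) ∈ M :=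
        fun a ha => hsub ⟨a, ha, rfl⟩
      exact hQM.2.2.1 _ (qm_sigma hQM hs) _ (qm_symm_ideal hQM hI B hBs hBI)
  · refine ⟨Tset_isQM I, ?_⟩
    rintro r s hr ⟨s2, hs2, B2, h2s, h2I, heq⟩
    have h1 : (r * s) • (1 : Matrix (Fin n) (Fin n) R) = r • s2 + r • B2 := by
      rw [mul_smul, heq, smul_add]
    rw [h1]
    refine (Tset_isQM I).2.2.1 _ (qm_smul_sigma (Tset_isQM I) hr hs2) _
      ⟨0, sigma_zero, r • B2, ?_, ?_, (zero_add _).symm⟩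
    · show (r • B2)ᵀ = r • B2
      rw [Matrix.transpose_smul]
      rw [show B2ᵀ = B2 from h2s]
    · intro i j
      simpa [Matrix.smul_apply] using I.mul_mem_left r (h2I i j)
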